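/- Let Ω = {y ∈ ℝ² : y₁ ≥ 0, y₂ ≥ 0, y₁ + y₂ = 1}, let A : ℝ² → ℝ² be the coordinate-swap map, and let P be the orthogonal projection of ℝ² onto the subspace spanned by (1,−1). Suppose U : ℝ² → ℝ is differentiable away from 0 and radially symmetric, i.e. U(z) = r(|z|) for some r : ℝ_{≥0} → ℝ. Then for all w, v ∈ Ω with w ≠ v, letting ḡ(w) = Aw and ḡ(v) = Av, one has P(∇U(ḡ(w) − ḡ(v))) = −P(∇U(w − v)). -/

import Mathlib

/-- The coordinate-swap map `A(u₁,u₂) = (u₂,u₁)` on `ℝ²`. -/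
noncomputable def swapMap : EuclideanSpace ℝ (Fin 2) → EuclideanSpace ℝ (Fin 2) :=
  fun u => WithLp.toLp 2 ![u 1, u 0]

/-- The span of `n₂ = (1,−1)` in `ℝ²`. -/
noncomputable def spanN₂ : Submodule ℝ (EuclideanSpace ℝ (Fin 2)) :=
  Submodule.span ℝ {(WithLp.toLp 2 ![1, -1] : EuclideanSpace ℝ (Fin 2))}

lemma gradient_even_neg (r : ℝ → ℝ) (U : EuclideanSpace ℝ (Fin 2) → ℝ)
    (hrad : ∀ z : EuclideanSpace ℝ (Fin 2), U z = r ‖z‖)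
    (hdiff : ∀ z : EuclideanSpace ℝ (Fin 2), z ≠ 0 → DifferentiableAt ℝ U z)
    (z : EuclideanSpace ℝ (Fin 2)) (hz : z ≠ 0) :
    gradient U (-z) = -gradient U z := by
  have heven : ∀ x : EuclideanSpace ℝ (Fin 2), U (-x) = U x := by
    intro x; rw [hrad, hrad, norm_neg]
  have h : HasGradientAt U (gradient U z) z :=
    (hdiff z hz).hasGradientAt
  have hF : HasFDerivAt U (InnerProductSpace.toDual ℝ _ (gradient U z)) z :=
    hasGradientAt_iff_hasFDerivAt.mp h
  -- compose with negation
  have hneg : HasFDerivAt (fun x : EuclideanSpace ℝ (Fin 2) => -x)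
      (-(ContinuousLinearMap.id ℝ (EuclideanSpace ℝ (Fin 2)))) (-z) :=
    (hasFDerivAt_id (-z)).neg
  have hF' : HasFDerivAt U ((InnerProductSpace.toDual ℝ _ (gradient U z))) (-(-z)) := by
    simpa using hF
  have hcomp : HasFDerivAt (fun x => U (-x))
      ((InnerProductSpace.toDual ℝ _ (gradient U z)).comp
        (-(ContinuousLinearMap.id ℝ (EuclideanSpace ℝ (Fin 2))))) (-z) :=
    hF'.comp (-z) hneg
  have hUeq : (fun x => U (-x)) = U := funext heven
  rw [hUeq] at hcomp
  have hgrad : HasGradientAt U (-(gradient U z)) (-z) := by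
    rw [hasGradientAt_iff_hasFDerivAt]
    convert hcomp using 1
    all_goals ext x
    all_goals simp [real_inner_comm, inner_neg_left]
  exact hgrad.gradient

/-- Lemma 4.5 of the paper: if `U` is radially symmetric and differentiable
away from `0`, then for distinct `w, v` in the unit simplex of `ℝ²`, with
`ḡ(w) = Aw` and `ḡ(v) = Av` (A the coordinate swap), the orthogonal projection
`P` onto the span of `(1,−1)` satisfies
`P(∇U(ḡ(w) − ḡ(v))) = −P(∇U(w − v))`. -/
theorem proj_gradient_swap_eq_neg
    (r : ℝ → ℝ) (U : EuclideanSpace ℝ (Fin 2) → ℝ)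
    (hrad : ∀ z : EuclideanSpace ℝ (Fin 2), U z = r ‖z‖)
    (hdiff : ∀ z : EuclideanSpace ℝ (Fin 2), z ≠ 0 → DifferentiableAt ℝ U z)
    (w v : EuclideanSpace ℝ (Fin 2))
    (hw : 0 ≤ w 0 ∧ 0 ≤ w 1 ∧ w 0 + w 1 = 1)
    (hv : 0 ≤ v 0 ∧ 0 ≤ v 1 ∧ v 0 + v 1 = 1)
    (hne : w ≠ v) :
    ((spanN₂.orthogonalProjectionOnto (gradient U (swapMap w - swapMap v)) : spanN₂)
        : EuclideanSpace ℝ (Fin 2))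
      = -((spanN₂.orthogonalProjectionOnto (gradient U (w - v)) : spanN₂)
        : EuclideanSpace ℝ (Fin 2)) := by
  have hz : w - v ≠ 0 := sub_ne_zero.mpr hne
  have hswap : swapMap w - swapMap v = -(w - v) := by
    ext i
    fin_cases i <;>
      simp [swapMap] <;> linarith [hw.2.2, hv.2.2]
  rw [hswap, gradient_even_neg r U hrad hdiff _ hz, map_neg]
  simp
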